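/- For every n ≥ 4, the number of occurrences of the pattern 112-21 in C_n and in D_n both equal (3/2)·4^{n-3} - 2^{n-4}. -/
import Mathlib

/-- The pair `(C_n, D_n)` of sigma-words, with `C_0 = D_0 = []`,
`C_{k+1} = C_k · 1 · D_k`, `D_{k+1} = C_k · 2 · D_k`
(so `C_1 = [1]`, `D_1 = [2]`). -/
def sigmaCD : ℕ → List ℕ × List ℕ
  | 0 => ([], [])
  | k + 1 => ((sigmaCD k).1 ++ 1 :: (sigmaCD k).2, (sigmaCD k).1 ++ 2 :: (sigmaCD k).2)

/-- The sigma-word `C_n`. -/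
def sigmaC (n : ℕ) : List ℕ := (sigmaCD n).1

/-- The sigma-word `D_n`. -/
def sigmaD (n : ℕ) : List ℕ := (sigmaCD n).2

/-- Number of occurrences of `p` as a (not necessarily contiguous) subsequence of `w`,
counted with multiplicity of position sets. -/
def subseqCount (p w : List ℕ) : ℕ := (w.sublistsLen p.length).count p

/-- Number of occurrences of `p` as a factor (contiguous subword) of `w`,
i.e. the number of starting positions at which `p` occurs in `w`. -/
def factorCount (p w : List ℕ) : ℕ :=
  (List.range w.length).countP fun i => decide ((w.drop i).take p.length = p)

/-- Number of occurrences of the generalized pattern `112-21` in `w`: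
pairs `(i, j)` with `i + 2 < j`, `w(i)w(i+1)w(i+2) = 112` and `w(j)w(j+1) = 21`. -/
def count112_21 (w : List ℕ) : ℕ :=
  ((Finset.range w.length ×ˢ Finset.range w.length).filter fun q =>
    q.1 + 2 < q.2 ∧ w.getD q.1 0 = 1 ∧ w.getD (q.1 + 1) 0 = 1 ∧ w.getD (q.1 + 2) 0 = 2 ∧
      w.getD q.2 0 = 2 ∧ w.getD (q.2 + 1) 0 = 1).card

/-! ### An automaton computing the pattern count -/

structure PatSt where
  c1 : ℕ
  c2 : ℕ
  a' : ℕ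
  a  : ℕ
  b  : ℕ
  p  : ℕ
deriving DecidableEq, Repr

def patStep (s : PatSt) (c : ℕ) : PatSt :=
  { c1 := s.c2, c2 := c,
    a' := s.a,
    a := s.a + (if s.c1 = 1 ∧ s.c2 = 1 ∧ c = 2 then 1 else 0),
    b := s.b + (if s.c2 = 2 ∧ c = 1 then 1 else 0),
    p := s.p + (if s.c2 = 2 ∧ c = 1 then s.a' else 0) }

def patRun (w : List ℕ) : PatSt := w.foldl patStep ⟨0,0,0,0,0,0⟩

/-! ### Specification functions -/

def specC1 (w : List ℕ) : ℕ := if 2 ≤ w.length then w.getD (w.length - 2) 0 else 0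
def specC2 (w : List ℕ) : ℕ := w.getD (w.length - 1) 0
def specA (w : List ℕ) : ℕ :=
  ∑ i ∈ Finset.range w.length,
    if w.getD i 0 = 1 ∧ w.getD (i+1) 0 = 1 ∧ w.getD (i+2) 0 = 2 then 1 else 0
def specA' (w : List ℕ) : ℕ :=
  ∑ i ∈ Finset.range w.length,
    if i + 4 ≤ w.length ∧ w.getD i 0 = 1 ∧ w.getD (i+1) 0 = 1 ∧ w.getD (i+2) 0 = 2 then 1 else 0
def specB (w : List ℕ) : ℕ :=
  ∑ j ∈ Finset.range w.length, if w.getD j 0 = 2 ∧ w.getD (j+1) 0 = 1 then 1 else 0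
def specP (w : List ℕ) : ℕ :=
  ∑ j ∈ Finset.range w.length, ∑ i ∈ Finset.range w.length,
    if i + 2 < j ∧ w.getD i 0 = 1 ∧ w.getD (i+1) 0 = 1 ∧ w.getD (i+2) 0 = 2 ∧
        w.getD j 0 = 2 ∧ w.getD (j+1) 0 = 1 then 1 else 0

def spec (w : List ℕ) : PatSt := ⟨specC1 w, specC2 w, specA' w, specA w, specB w, specP w⟩

lemma getD_snoc (w : List ℕ) (c : ℕ) (i : ℕ) :
    (w ++ [c]).getD i 0 = if i < w.length then w.getD i 0 else if i = w.length then c else 0 := by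
  rcases lt_trichotomy i w.length with h | h | h
  · rw [List.getD_append _ _ _ _ h, if_pos h]
  · subst h
    rw [List.getD_append_right _ _ _ _ le_rfl]
    simp
  · rw [List.getD_append_right _ _ _ _ h.le, if_neg (by omega), if_neg (by omega)]
    apply List.getD_eq_default
    simp; omega

lemma getD_oob (w : List ℕ) {i : ℕ} (h : w.length ≤ i) : w.getD i 0 = 0 :=
  List.getD_eq_default _ _ h

/-! ### The snoc lemmas -/

lemma specC2_snoc (w : List ℕ) (c : ℕ) : specC2 (w ++ [c]) = c := by
  simp [specC2, getD_snoc]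

lemma specC1_snoc (w : List ℕ) (c : ℕ) : specC1 (w ++ [c]) = specC2 w := by
  by_cases h : 1 ≤ w.length
  · unfold specC1 specC2
    rw [List.length_append, List.length_singleton, if_pos (by omega), getD_snoc,
      if_pos (by omega)]
    congr 1
  · have : w = [] := List.eq_nil_of_length_eq_zero (by omega)
    subst this
    simp [specC1, specC2]

lemma specA'_snoc (w : List ℕ) (c : ℕ) : specA' (w ++ [c]) = specA w := by
  unfold specA' specA
  rw [List.length_append, List.length_singleton, Finset.sum_range_succ]
  rw [if_neg (by rintro ⟨h, _⟩; omega), add_zero]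
  refine Finset.sum_congr rfl fun i hi => ?_
  simp only [Finset.mem_range] at hi
  rcases le_or_gt (i + 4) (w.length + 1) with h4 | h4
  · have h1 : i < w.length := by omega
    have h2 : i + 1 < w.length := by omega
    have h3 : i + 2 < w.length := by omega
    simp only [getD_snoc, h1, h2, h3, if_true]
    exact if_congr (and_iff_right h4) rfl rfl
  · rw [if_neg (by rintro ⟨h, _⟩; omega), if_neg (by
      rintro ⟨h1, h2, h3⟩
      rw [getD_oob w (by omega)] at h3
      omega)]

lemma specA_snoc_aux (w : List ℕ) (c m : ℕ) (hm : w.length = m + 2) :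
    specA (w ++ [c]) = specA w +
      (if w.getD m 0 = 1 ∧ w.getD (m+1) 0 = 1 ∧ c = 2 then 1 else 0) := by
  have g0 : (w ++ [c]).getD m 0 = w.getD m 0 := by rw [getD_snoc, if_pos (by omega)]
  have g1 : (w ++ [c]).getD (m+1) 0 = w.getD (m+1) 0 := by rw [getD_snoc, if_pos (by omega)]
  have g2 : (w ++ [c]).getD (m+2) 0 = c := by
    rw [getD_snoc, if_neg (by omega), if_pos (by omega)]
  have hw : specA w = ∑ i ∈ Finset.range (w.length + 1),
      (if w.getD i 0 = 1 ∧ w.getD (i+1) 0 = 1 ∧ w.getD (i+2) 0 = 2 then 1 else 0) := by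
    rw [Finset.sum_range_succ, getD_oob w le_rfl,
      if_neg (by rintro ⟨h, _⟩; exact absurd h (by omega)), add_zero]
    rfl
  rw [hw]
  unfold specA
  rw [List.length_append, List.length_singleton]
  have hmem : m ∈ Finset.range (w.length + 1) := by simp; omega
  rw [← Finset.add_sum_erase _ _ hmem, ← Finset.add_sum_erase _ _ hmem]
  have hpt : (if (w ++ [c]).getD m 0 = 1 ∧ (w ++ [c]).getD (m+1) 0 = 1 ∧
      (w ++ [c]).getD (m+2) 0 = 2 then 1 else 0) =
      (if w.getD m 0 = 1 ∧ w.getD (m+1) 0 = 1 ∧ c = 2 then 1 else 0) := by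
    rw [g0, g1, g2]
  have hpt2 : (if w.getD m 0 = 1 ∧ w.getD (m+1) 0 = 1 ∧ w.getD (m+2) 0 = 2
      then (1:ℕ) else 0) = 0 := by
    rw [if_neg]
    rintro ⟨_, _, h3⟩
    rw [getD_oob w (by omega)] at h3
    omega
  have hsum : ∑ i ∈ (Finset.range (w.length + 1)).erase m,
      (if (w ++ [c]).getD i 0 = 1 ∧ (w ++ [c]).getD (i+1) 0 = 1 ∧
        (w ++ [c]).getD (i+2) 0 = 2 then 1 else 0) =
      ∑ i ∈ (Finset.range (w.length + 1)).erase m,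
      (if w.getD i 0 = 1 ∧ w.getD (i+1) 0 = 1 ∧ w.getD (i+2) 0 = 2 then 1 else 0) := by
    refine Finset.sum_congr rfl fun i hi => ?_
    simp only [Finset.mem_erase, Finset.mem_range] at hi
    obtain ⟨hne, hilt⟩ := hi
    by_cases hc : i + 2 < w.length
    · rw [getD_snoc, if_pos (by omega : i < w.length)]
      rw [getD_snoc (i := i+1), if_pos (by omega : i + 1 < w.length)]
      rw [getD_snoc (i := i+2), if_pos hc]
    · rw [if_neg, if_neg]
      · rintro ⟨_, _, h3⟩
        rw [getD_oob w (by omega)] at h3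
        omega
      · rintro ⟨_, _, h3⟩
        rw [getD_oob (w ++ [c])
          (by rw [List.length_append, List.length_singleton]; omega)] at h3
        omega
  rw [hpt, hpt2, hsum]
  omega

lemma specA_snoc (w : List ℕ) (c : ℕ) :
    specA (w ++ [c]) = specA w +
      (if specC1 w = 1 ∧ specC2 w = 1 ∧ c = 2 then 1 else 0) := by
  by_cases h : 2 ≤ w.length
  · obtain ⟨m, hm⟩ : ∃ m, w.length = m + 2 := ⟨w.length - 2, by omega⟩
    rw [specA_snoc_aux w c m hm]
    have h1 : specC1 w = w.getD m 0 := by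
      unfold specC1
      rw [if_pos h, hm]
      norm_num
    have h2 : specC2 w = w.getD (m+1) 0 := by
      unfold specC2
      rw [hm]
      norm_num
    rw [h1, h2]
  · have : w = [] ∨ ∃ x, w = [x] := by
      rcases w with _ | ⟨x, _ | ⟨y, t⟩⟩
      · exact Or.inl rfl
      · exact Or.inr ⟨x, rfl⟩
      · exact absurd (by simp : 2 ≤ (x :: y :: t).length) h
    rcases this with rfl | ⟨x, rfl⟩
    · simp [specA, specC1, specC2]
    · simp [specA, specC1, specC2, Finset.sum_range_succ]

lemma specB_snoc_aux (w : List ℕ) (c m : ℕ) (hm : w.length = m + 1) :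
    specB (w ++ [c]) = specB w + (if w.getD m 0 = 2 ∧ c = 1 then 1 else 0) := by
  have g0 : (w ++ [c]).getD m 0 = w.getD m 0 := by rw [getD_snoc, if_pos (by omega)]
  have g1 : (w ++ [c]).getD (m+1) 0 = c := by
    rw [getD_snoc, if_neg (by omega), if_pos (by omega)]
  have hw : specB w = ∑ j ∈ Finset.range (w.length + 1),
      (if w.getD j 0 = 2 ∧ w.getD (j+1) 0 = 1 then 1 else 0) := by
    rw [Finset.sum_range_succ, getD_oob w le_rfl,
      if_neg (by rintro ⟨h, _⟩; exact absurd h (by omega)), add_zero]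
    rfl
  rw [hw]
  unfold specB
  rw [List.length_append, List.length_singleton]
  have hmem : m ∈ Finset.range (w.length + 1) := by simp; omega
  rw [← Finset.add_sum_erase _ _ hmem, ← Finset.add_sum_erase _ _ hmem]
  have hpt : (if (w ++ [c]).getD m 0 = 2 ∧ (w ++ [c]).getD (m+1) 0 = 1 then 1 else 0) =
      (if w.getD m 0 = 2 ∧ c = 1 then 1 else 0) := by
    rw [g0, g1]
  have hpt2 : (if w.getD m 0 = 2 ∧ w.getD (m+1) 0 = 1 then (1:ℕ) else 0) = 0 := by
    rw [if_neg]
    rintro ⟨_, h2⟩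
    rw [getD_oob w (by omega)] at h2
    omega
  have hsum : ∑ j ∈ (Finset.range (w.length + 1)).erase m,
      (if (w ++ [c]).getD j 0 = 2 ∧ (w ++ [c]).getD (j+1) 0 = 1 then 1 else 0) =
      ∑ j ∈ (Finset.range (w.length + 1)).erase m,
      (if w.getD j 0 = 2 ∧ w.getD (j+1) 0 = 1 then 1 else 0) := by
    refine Finset.sum_congr rfl fun j hj => ?_
    simp only [Finset.mem_erase, Finset.mem_range] at hj
    obtain ⟨hne, hjlt⟩ := hj
    by_cases hc : j + 1 < w.length
    · rw [getD_snoc, if_pos (by omega : j < w.length)]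
      rw [getD_snoc (i := j+1), if_pos hc]
    · -- here j = w.length (since j ≠ m = w.length - 1)
      rw [if_neg, if_neg]
      · rintro ⟨h1, _⟩
        rw [getD_oob w (by omega)] at h1
        omega
      · rintro ⟨_, h2⟩
        rw [getD_oob (w ++ [c])
          (by rw [List.length_append, List.length_singleton]; omega)] at h2
        omega
  rw [hpt, hpt2, hsum]
  omega

lemma specB_snoc (w : List ℕ) (c : ℕ) :
    specB (w ++ [c]) = specB w + (if specC2 w = 2 ∧ c = 1 then 1 else 0) := by
  by_cases h : 1 ≤ w.length
  · obtain ⟨m, hm⟩ : ∃ m, w.length = m + 1 := ⟨w.length - 1, by omega⟩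
    rw [specB_snoc_aux w c m hm]
    have h2 : specC2 w = w.getD m 0 := by
      unfold specC2
      rw [hm]
      norm_num
    rw [h2]
  · have : w = [] := List.eq_nil_of_length_eq_zero (by omega)
    subst this
    simp [specB, specC2, Finset.sum_range_succ]

lemma specP_snoc_aux (w : List ℕ) (c m : ℕ) (hm : w.length = m + 1) :
    specP (w ++ [c]) = specP w + (if w.getD m 0 = 2 ∧ c = 1 then specA' w else 0) := by
  have g5 : (w ++ [c]).getD m 0 = w.getD m 0 := by rw [getD_snoc, if_pos (by omega)]
  have g6 : (w ++ [c]).getD (m+1) 0 = c := by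
    rw [getD_snoc, if_neg (by omega), if_pos (by omega)]
  -- extend the outer sum of `specP w` by one zero term
  have hw : specP w = ∑ j ∈ Finset.range (w.length + 1), ∑ i ∈ Finset.range w.length,
      (if i + 2 < j ∧ w.getD i 0 = 1 ∧ w.getD (i+1) 0 = 1 ∧ w.getD (i+2) 0 = 2 ∧
        w.getD j 0 = 2 ∧ w.getD (j+1) 0 = 1 then 1 else 0) := by
    rw [Finset.sum_range_succ]
    have hz : (∑ i ∈ Finset.range w.length,
        (if i + 2 < w.length ∧ w.getD i 0 = 1 ∧ w.getD (i+1) 0 = 1 ∧ w.getD (i+2) 0 = 2 ∧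
          w.getD w.length 0 = 2 ∧ w.getD (w.length+1) 0 = 1 then 1 else 0)) = 0 := by
      refine Finset.sum_eq_zero fun i _ => ?_
      rw [if_neg]
      rintro ⟨_, _, _, _, h5, _⟩
      rw [getD_oob w le_rfl] at h5
      omega
    rw [hz, add_zero]
    rfl
  rw [hw]
  unfold specP
  rw [List.length_append, List.length_singleton]
  have hmem : m ∈ Finset.range (w.length + 1) := by simp; omega
  conv_lhs => rw [← Finset.add_sum_erase _ _ hmem]
  conv_rhs => rw [← Finset.add_sum_erase _ _ hmem]
  -- the new boundary term
  have hpt : (∑ i ∈ Finset.range (w.length + 1),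
      (if i + 2 < m ∧ (w ++ [c]).getD i 0 = 1 ∧ (w ++ [c]).getD (i+1) 0 = 1 ∧
        (w ++ [c]).getD (i+2) 0 = 2 ∧ (w ++ [c]).getD m 0 = 2 ∧
        (w ++ [c]).getD (m+1) 0 = 1 then 1 else 0)) =
      (if w.getD m 0 = 2 ∧ c = 1 then specA' w else 0) := by
    simp only [g5, g6]
    by_cases h : w.getD m 0 = 2 ∧ c = 1
    · rw [if_pos h]
      unfold specA'
      rw [Finset.sum_range_succ,
        if_neg (by rintro ⟨h1, _⟩; omega), add_zero]
      refine Finset.sum_congr rfl fun i hi => ?_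
      simp only [Finset.mem_range] at hi
      by_cases hij : i + 2 < m
      · have hI1 : i < w.length := by omega
        have hI2 : i + 1 < w.length := by omega
        have hI3 : i + 2 < w.length := by omega
        simp only [getD_snoc, hI1, hI2, hI3, if_true]
        refine if_congr ?_ rfl rfl
        constructor
        · rintro ⟨_, a1, a2, a3, _, _⟩
          exact ⟨by omega, a1, a2, a3⟩
        · rintro ⟨_, a1, a2, a3⟩
          exact ⟨hij, a1, a2, a3, h.1, h.2⟩
      · rw [if_neg (by rintro ⟨h1, _⟩; omega), if_neg (by rintro ⟨h1, _⟩; omega)]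
    · rw [if_neg h]
      refine Finset.sum_eq_zero fun i _ => ?_
      rw [if_neg]
      rintro ⟨_, _, _, _, h5, h6⟩
      exact h ⟨h5, h6⟩
  -- the old boundary term is zero
  have hpt2 : (∑ i ∈ Finset.range w.length,
      (if i + 2 < m ∧ w.getD i 0 = 1 ∧ w.getD (i+1) 0 = 1 ∧ w.getD (i+2) 0 = 2 ∧
        w.getD m 0 = 2 ∧ w.getD (m+1) 0 = 1 then 1 else 0)) = 0 := by
    refine Finset.sum_eq_zero fun i _ => ?_
    rw [if_neg]
    rintro ⟨_, _, _, _, _, h6⟩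
    rw [getD_oob w (by omega)] at h6
    omega
  -- away from the boundary nothing changes
  have hsum : ∑ j ∈ (Finset.range (w.length + 1)).erase m, ∑ i ∈ Finset.range (w.length + 1),
      (if i + 2 < j ∧ (w ++ [c]).getD i 0 = 1 ∧ (w ++ [c]).getD (i+1) 0 = 1 ∧
        (w ++ [c]).getD (i+2) 0 = 2 ∧ (w ++ [c]).getD j 0 = 2 ∧
        (w ++ [c]).getD (j+1) 0 = 1 then 1 else 0) =
      ∑ j ∈ (Finset.range (w.length + 1)).erase m, ∑ i ∈ Finset.range w.length,
      (if i + 2 < j ∧ w.getD i 0 = 1 ∧ w.getD (i+1) 0 = 1 ∧ w.getD (i+2) 0 = 2 ∧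
        w.getD j 0 = 2 ∧ w.getD (j+1) 0 = 1 then 1 else 0) := by
    refine Finset.sum_congr rfl fun j hj => ?_
    simp only [Finset.mem_erase, Finset.mem_range] at hj
    obtain ⟨hne, hjlt⟩ := hj
    by_cases hj' : j < m
    · rw [Finset.sum_range_succ, if_neg (by rintro ⟨h1, _⟩; omega), add_zero]
      refine Finset.sum_congr rfl fun i hi => ?_
      simp only [Finset.mem_range] at hi
      by_cases hij : i + 2 < j
      · have hI1 : i < w.length := by omega
        have hI2 : i + 1 < w.length := by omega
        have hI3 : i + 2 < w.length := by omega
        have hJ1 : j < w.length := by omega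
        have hJ2 : j + 1 < w.length := by omega
        simp only [getD_snoc, hI1, hI2, hI3, hJ1, hJ2, if_true]
      · rw [if_neg (by rintro ⟨h1, _⟩; omega), if_neg (by rintro ⟨h1, _⟩; omega)]
    · -- j = w.length
      have hjw : j = w.length := by omega
      trans (0:ℕ)
      · refine Finset.sum_eq_zero fun i _ => ?_
        rw [if_neg]
        rintro ⟨_, _, _, _, _, h6⟩
        rw [getD_oob (w ++ [c])
          (by rw [List.length_append, List.length_singleton]; omega)] at h6
        omega
      · refine (Finset.sum_eq_zero fun i _ => ?_).symm
        rw [if_neg]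
        rintro ⟨_, _, _, _, h5, _⟩
        rw [getD_oob w (by omega)] at h5
        omega
  rw [hpt, hpt2, hsum]
  omega

lemma specP_snoc (w : List ℕ) (c : ℕ) :
    specP (w ++ [c]) = specP w + (if specC2 w = 2 ∧ c = 1 then specA' w else 0) := by
  by_cases h : 1 ≤ w.length
  · obtain ⟨m, hm⟩ : ∃ m, w.length = m + 1 := ⟨w.length - 1, by omega⟩
    rw [specP_snoc_aux w c m hm]
    have h2 : specC2 w = w.getD m 0 := by
      unfold specC2
      rw [hm]
      norm_num
    rw [h2]
  · have : w = [] := List.eq_nil_of_length_eq_zero (by omega)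
    subst this
    simp [specP, specC2, specA', Finset.sum_range_succ]

lemma spec_snoc (w : List ℕ) (c : ℕ) : spec (w ++ [c]) = patStep (spec w) c := by
  unfold spec patStep
  simp only [PatSt.mk.injEq]
  exact ⟨specC1_snoc w c, specC2_snoc w c, specA'_snoc w c, specA_snoc w c,
    specB_snoc w c, specP_snoc w c⟩

lemma run_eq_spec (w : List ℕ) : patRun w = spec w := by
  induction w using List.reverseRecOn with
  | nil => decide
  | append_singleton w c ih =>
      unfold patRun at *
      rw [List.foldl_append, List.foldl_cons, List.foldl_nil, ih, ← spec_snoc]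

lemma count_eq_specP (w : List ℕ) : count112_21 w = specP w := by
  unfold count112_21 specP
  rw [Finset.card_filter, Finset.sum_product_right]

/-- The key shift lemma for the automaton. -/
lemma patShift (v : List ℕ) : ∀ (c1 c2 a' a b p k l m : ℕ),
    v.foldl patStep ⟨c1, c2, a' + k, a + k, b + l, p + m + k * b⟩ =
      (fun r : PatSt => (⟨r.c1, r.c2, r.a' + k, r.a + k, r.b + l, r.p + m + k * r.b⟩ : PatSt))
        (v.foldl patStep ⟨c1, c2, a', a, b, p⟩) := by
  induction v with
  | nil => intro c1 c2 a' a b p k l m; rfl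
  | cons c v ih =>
      intro c1 c2 a' a b p k l m
      simp only [List.foldl_cons, patStep]
      rw [show (⟨c2, c, a + k, a + k + (if c1 = 1 ∧ c2 = 1 ∧ c = 2 then 1 else 0),
          b + l + (if c2 = 2 ∧ c = 1 then 1 else 0),
          p + m + k * b + (if c2 = 2 ∧ c = 1 then a' + k else 0)⟩ : PatSt) =
          ⟨c2, c, a + k, (a + (if c1 = 1 ∧ c2 = 1 ∧ c = 2 then 1 else 0)) + k,
          (b + (if c2 = 2 ∧ c = 1 then 1 else 0)) + l,
          (p + (if c2 = 2 ∧ c = 1 then a' else 0)) + m +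
            k * (b + (if c2 = 2 ∧ c = 1 then 1 else 0))⟩ from by
        simp only [PatSt.mk.injEq]
        refine ⟨trivial, trivial, trivial, by ring, by ring, ?_⟩
        split_ifs <;> ring]
      exact ih c2 c a _ _ _ k l m

/-! ### The sigma words -/

lemma sigmaC_succ (k : ℕ) : sigmaC (k+1) = sigmaC k ++ 1 :: sigmaD k := rfl
lemma sigmaD_succ (k : ℕ) : sigmaD (k+1) = sigmaC k ++ 2 :: sigmaD k := rfl

lemma sigmaC_ones : ∀ k : ℕ, ∃ u, sigmaC (k+2) = 1 :: 1 :: u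
  | 0 => ⟨[2], rfl⟩
  | (k+1) => by
      obtain ⟨u, hu⟩ := sigmaC_ones k
      exact ⟨u ++ 1 :: sigmaD (k+2), by rw [sigmaC_succ, hu]; rfl⟩

lemma sigmaD_ones (k : ℕ) : ∃ v, sigmaD (k+3) = 1 :: 1 :: v := by
  obtain ⟨u, hu⟩ := sigmaC_ones k
  exact ⟨u ++ 2 :: sigmaD (k+2), by rw [sigmaD_succ, hu]; rfl⟩

def valA : ℕ → ℕ
  | 0 => 3
  | (m+1) => 2 * valA m
def valB : ℕ → ℕ
  | 0 => 3
  | (m+1) => 2 * valB m + 1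
def valP : ℕ → ℕ
  | 0 => 5
  | (m+1) => 2 * valP m + valA m * (valB m + 1)

lemma sigma_inv (m : ℕ) :
    patRun (sigmaC (m+4)) = ⟨2, 2, valA m, valA m, valB m, valP m⟩ ∧
    patRun (sigmaD (m+4)) = ⟨2, 2, valA m, valA m, valB m, valP m⟩ := by
  induction m with
  | zero => exact ⟨by decide, by decide⟩
  | succ m ih =>
      obtain ⟨hC, hD⟩ := ih
      obtain ⟨v, hv⟩ := sigmaD_ones (m+1)
      unfold patRun at hC hD
      have hrunD : v.foldl patStep ⟨1, 1, 0, 0, 0, 0⟩ = ⟨2, 2, valA m, valA m, valB m, valP m⟩ := by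
        rw [← hD, hv]
        rfl
      have hshift := patShift v 1 1 0 0 0 0 (valA m) (valB m + 1) (valP m + valA m)
      simp only [Nat.zero_add, Nat.mul_zero, Nat.add_zero] at hshift
      constructor
      · unfold patRun
        rw [show sigmaC (m+1+4) = sigmaC (m+4) ++ 1 :: sigmaD (m+4) from rfl, hv,
          List.foldl_append, hC]
        simp only [List.foldl_cons]
        rw [show patStep (⟨2, 2, valA m, valA m, valB m, valP m⟩ : PatSt) 1 =
            ⟨2, 1, valA m, valA m, valB m + 1, valP m + valA m⟩ from by simp [patStep]]
        rw [show patStep (⟨2, 1, valA m, valA m, valB m + 1, valP m + valA m⟩ : PatSt) 1 =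
            ⟨1, 1, valA m, valA m, valB m + 1, valP m + valA m⟩ from by simp [patStep]]
        rw [show patStep (⟨1, 1, valA m, valA m, valB m + 1, valP m + valA m⟩ : PatSt) 1 =
            ⟨1, 1, valA m, valA m, valB m + 1, valP m + valA m⟩ from by simp [patStep]]
        rw [hshift, hrunD]
        simp only [valA, valB, valP, PatSt.mk.injEq]
        refine ⟨trivial, trivial, by ring, by ring, by ring, by ring⟩
      · unfold patRun
        rw [show sigmaD (m+1+4) = sigmaC (m+4) ++ 2 :: sigmaD (m+4) from rfl, hv,
          List.foldl_append, hC]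
        simp only [List.foldl_cons]
        rw [show patStep (⟨2, 2, valA m, valA m, valB m, valP m⟩ : PatSt) 2 =
            ⟨2, 2, valA m, valA m, valB m, valP m⟩ from by simp [patStep]]
        rw [show patStep (⟨2, 2, valA m, valA m, valB m, valP m⟩ : PatSt) 1 =
            ⟨2, 1, valA m, valA m, valB m + 1, valP m + valA m⟩ from by simp [patStep]]
        rw [show patStep (⟨2, 1, valA m, valA m, valB m + 1, valP m + valA m⟩ : PatSt) 1 =
            ⟨1, 1, valA m, valA m, valB m + 1, valP m + valA m⟩ from by simp [patStep]]
        rw [hshift, hrunD]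
        simp only [valA, valB, valP, PatSt.mk.injEq]
        refine ⟨trivial, trivial, by ring, by ring, by ring, by ring⟩

lemma valA_q (m : ℕ) : (valA m : ℚ) = 3 * 2 ^ m := by
  induction m with
  | zero => norm_num [valA]
  | succ m ih =>
      rw [show valA (m+1) = 2 * valA m from rfl]
      push_cast
      rw [ih]
      ring

lemma valB_q (m : ℕ) : (valB m : ℚ) = 4 * 2 ^ m - 1 := by
  induction m with
  | zero => norm_num [valB]
  | succ m ih =>
      rw [show valB (m+1) = 2 * valB m + 1 from rfl]
      push_cast
      rw [ih]
      ring

lemma valP_q (m : ℕ) : (valP m : ℚ) = 6 * 4 ^ m - 2 ^ m := by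
  have h4 : ∀ j : ℕ, (4:ℚ) ^ j = 2 ^ j * 2 ^ j := by
    intro j
    rw [show (4:ℚ) = 2 * 2 from by norm_num, mul_pow]
  induction m with
  | zero => norm_num [valP]
  | succ m ih =>
      rw [show valP (m+1) = 2 * valP m + valA m * (valB m + 1) from rfl]
      push_cast
      rw [ih, valA_q, valB_q, h4 m, h4 (m+1)]
      ring

lemma count_sigma (m : ℕ) :
    count112_21 (sigmaC (m+4)) = valP m ∧ count112_21 (sigmaD (m+4)) = valP m := by
  obtain ⟨hC, hD⟩ := sigma_inv m
  constructor
  · rw [count_eq_specP]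
    exact congrArg PatSt.p ((run_eq_spec (sigmaC (m+4))).symm.trans hC)
  · rw [count_eq_specP]
    exact congrArg PatSt.p ((run_eq_spec (sigmaD (m+4))).symm.trans hD)

theorem pattern_112_21 (n : ℕ) (hn : 4 ≤ n) :
    (count112_21 (sigmaC n) : ℚ) = (3 / 2) * 4 ^ (n - 3) - 2 ^ (n - 4) ∧
    (count112_21 (sigmaD n) : ℚ) = (3 / 2) * 4 ^ (n - 3) - 2 ^ (n - 4) := by
  obtain ⟨m, rfl⟩ : ∃ m, n = m + 4 := ⟨n - 4, by omega⟩
  obtain ⟨hC, hD⟩ := count_sigma m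
  rw [hC, hD, valP_q, show m + 4 - 3 = m + 1 from by omega, show m + 4 - 4 = m from by omega]
  constructor <;> ring
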